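/- Let κ be a kernel satisfying (κ₁) for order 2 and (κ₂), and let h : ℝ₊ → ℝ₊ be bounded with w·h log-continuous at a point z ∈ ℝ₊. Then lim_{m→∞} M_m^κ(h, z) = h(z), where M_m^κ is the max-product Kantorovich exponential sampling operator taken over all j ∈ ℤ. -/

import Mathlib

open Real MeasureTheory

/-- Max-product Kantorovich exponential sampling operator over all integers. -/
noncomputable def MopZ (κ : ℝ → ℝ) (m : ℝ) (h : ℝ → ℝ) (z : ℝ) : ℝ :=
  sSup (Set.range fun j : ℤ => κ (Real.exp (-(j : ℝ)) * z ^ m) *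
      (m * ∫ v in (j : ℝ)/m..((j : ℝ) + 1)/m, h (Real.exp v))) /
  sSup (Set.range fun j : ℤ => κ (Real.exp (-(j : ℝ)) * z ^ m))

/-- Log-uniform continuity on the positive reals. -/
def LogUC (g : ℝ → ℝ) : Prop :=
  ∀ ε : ℝ, 0 < ε → ∃ δ : ℝ, 0 < δ ∧ ∀ z₁ : ℝ, 0 < z₁ → ∀ z₂ : ℝ, 0 < z₂ →
    |Real.log z₁ - Real.log z₂| ≤ δ → |g z₁ - g z₂| < ε

/-- Membership in the weighted space `V^w(ℝ₊)`, `w z = 1/(1+(log z)^2)`. -/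
def MemVw (h : ℝ → ℝ) : Prop :=
  LogUC (fun z => h z / (1 + (Real.log z) ^ 2)) ∧
    ∃ K : ℝ, ∀ z : ℝ, 0 < z → |h z| / (1 + (Real.log z) ^ 2) ≤ K

/-- Weighted logarithmic modulus of continuity. -/
noncomputable def Upsilon (h : ℝ → ℝ) (ρ : ℝ) : ℝ :=
  sSup {y : ℝ | ∃ u z : ℝ, 0 < u ∧ 0 < z ∧ |Real.log u| ≤ ρ ∧
    y = |h (u * z) - h z| / ((1 + (Real.log z) ^ 2) * (1 + (Real.log u) ^ 2))}

private lemma bddAbove_range_of_le {f : ℤ → ℝ} {c : ℝ} (hf : ∀ j, f j ≤ c) :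
    BddAbove (Set.range f) := ⟨c, by rintro y ⟨j, rfl⟩; exact hf j⟩

private lemma abs_ciSup_sub_ciSup {f g : ℤ → ℝ} {c : ℝ}
    (hf : BddAbove (Set.range f)) (hg : BddAbove (Set.range g))
    (hfg : ∀ j, |f j - g j| ≤ c) : |(⨆ j, f j) - ⨆ j, g j| ≤ c := by
  rw [abs_sub_le_iff]
  constructor
  · rw [sub_le_iff_le_add]
    refine ciSup_le fun j => ?_
    have h1 : f j - g j ≤ c := (abs_sub_le_iff.1 (hfg j)).1
    have h2 : g j ≤ ⨆ i, g i := le_ciSup hg j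
    linarith
  · rw [sub_le_iff_le_add]
    refine ciSup_le fun j => ?_
    have h1 : g j - f j ≤ c := (abs_sub_le_iff.1 (hfg j)).2
    have h2 : f j ≤ ⨆ i, f i := le_ciSup hf j
    linarith

theorem MopZ_pointwise_convergence (κ : ℝ → ℝ) (hκmeas : Measurable κ)
    (B M2 ζ : ℝ) (hκb : ∀ x : ℝ, 0 < x → |κ x| ≤ B)
    (hm2 : ∀ s : ℝ, 0 < s → ∀ j : ℤ,
      |κ (Real.exp (-(j : ℝ)) * s)| * |(j : ℝ) - Real.log s| ^ 2 ≤ M2)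
    (hζ : 0 < ζ) (hinf : ∀ u ∈ Set.Icc (1 : ℝ) (Real.exp 1), ζ ≤ κ u)
    (h : ℝ → ℝ) (hmeas : Measurable h) (hpos : ∀ x : ℝ, 0 < x → 0 ≤ h x)
    (hb : ∃ K : ℝ, ∀ x : ℝ, 0 < x → h x ≤ K)
    (z : ℝ) (hz : 0 < z)
    (hcont : ∀ ε : ℝ, 0 < ε → ∃ δ : ℝ, 0 < δ ∧ ∀ u : ℝ, 0 < u →
      |Real.log u - Real.log z| ≤ δ → |h u - h z| < ε) :
    Filter.Tendsto (fun m : ℝ => MopZ κ m h z) Filter.atTop (nhds (h z)) := by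
  obtain ⟨K, hK⟩ := hb
  have hB : ζ ≤ B :=
    le_trans (le_trans (hinf 1 ⟨le_refl 1, Real.one_le_exp zero_le_one⟩) (le_abs_self _))
      (hκb 1 one_pos)
  have hBpos : 0 < B := lt_of_lt_of_le hζ hB
  have hM2 : 0 ≤ M2 := by
    have := hm2 1 one_pos 0
    simpa using this
  have hK0 : 0 ≤ K := le_trans (hpos 1 one_pos) (hK 1 one_pos)
  have hhz0 : 0 ≤ h z := hpos z hz
  have hhzK : h z ≤ K := hK z hz
  have hint : ∀ a b : ℝ, IntervalIntegrable (fun v => h (Real.exp v)) volume a b := by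
    intro a b
    rw [intervalIntegrable_iff]
    refine MeasureTheory.Integrable.mono' (g := fun _ => K) ?_ ?_ ?_
    · exact (integrableOn_const_iff).2 (Or.inr (by rw [Set.uIoc]; exact measure_Ioc_lt_top))
    · exact (hmeas.comp Real.measurable_exp).aestronglyMeasurable
    · refine Filter.Eventually.of_forall fun v => ?_
      rw [Real.norm_eq_abs, abs_of_nonneg (hpos _ (Real.exp_pos v))]
      exact hK _ (Real.exp_pos v)
  rw [Metric.tendsto_atTop]
  intro ε hε
  set ε₀ := ζ * ε / (2 * B) with hε₀def
  have hε₀ : 0 < ε₀ := by positivity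
  obtain ⟨δ, hδ, hδc⟩ := hcont ε₀ hε₀
  set S := Real.sqrt (8 * M2 * K / (ζ * ε * δ ^ 2)) with hSdef
  have hS0 : 0 ≤ S := Real.sqrt_nonneg _
  refine ⟨max (2 / δ) (S + 1), fun m hm => ?_⟩
  have hmδ : 2 / δ ≤ m := le_trans (le_max_left _ _) hm
  have hmS : S + 1 ≤ m := le_trans (le_max_right _ _) hm
  have hm0 : 0 < m := by linarith
  have hm0' : m ≠ 0 := ne_of_gt hm0
  have h2mδ : 2 ≤ m * δ := (div_le_iff₀ hδ).1 hmδ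
  have h1m : 1 / m ≤ δ / 2 := by
    rw [div_le_div_iff₀ hm0 two_pos]
    nlinarith
  have hmsq : 8 * M2 * K ≤ m ^ 2 * (ζ * ε * δ ^ 2) := by
    have h0 : 0 ≤ 8 * M2 * K / (ζ * ε * δ ^ 2) := by positivity
    have hSm : S ≤ m := by linarith
    have hsq : 8 * M2 * K / (ζ * ε * δ ^ 2) ≤ m ^ 2 := by
      calc 8 * M2 * K / (ζ * ε * δ ^ 2) = S ^ 2 := (Real.sq_sqrt h0).symm
        _ ≤ m ^ 2 := pow_le_pow_left₀ hS0 hSm 2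
    have hpos' : 0 < ζ * ε * δ ^ 2 := by positivity
    calc 8 * M2 * K = 8 * M2 * K / (ζ * ε * δ ^ 2) * (ζ * ε * δ ^ 2) := by field_simp
      _ ≤ m ^ 2 * (ζ * ε * δ ^ 2) := mul_le_mul_of_nonneg_right hsq hpos'.le
  set κj : ℤ → ℝ := fun j => κ (Real.exp (-(j : ℝ)) * z ^ m) with hκjdef
  set Aj : ℤ → ℝ := fun j => m * ∫ v in (j : ℝ)/m..((j : ℝ) + 1)/m, h (Real.exp v) with hAjdef
  have hxpos : ∀ j : ℤ, 0 < Real.exp (-(j : ℝ)) * z ^ m := fun j => by positivity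
  have hκjB : ∀ j, |κj j| ≤ B := fun j => hκb _ (hxpos j)
  have hab : ∀ j : ℤ, ((j : ℝ)/m) ≤ (((j : ℝ) + 1)/m) := fun j =>
    (div_le_div_iff_of_pos_right hm0).2 (by linarith)
  have hba : ∀ j : ℤ, (((j : ℝ) + 1)/m) - ((j : ℝ)/m) = 1/m := by
    intro j; field_simp; ring
  have hA0 : ∀ j, 0 ≤ Aj j := fun j =>
    mul_nonneg hm0.le (intervalIntegral.integral_nonneg (hab j)
      fun u _ => hpos _ (Real.exp_pos u))
  have hAK : ∀ j, Aj j ≤ K := by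
    intro j
    have h1 : (∫ v in (j : ℝ)/m..((j : ℝ) + 1)/m, h (Real.exp v))
        ≤ ∫ _ in (j : ℝ)/m..((j : ℝ) + 1)/m, K :=
      intervalIntegral.integral_mono_on (hab j) (hint _ _) intervalIntegrable_const
        (fun x _ => hK _ (Real.exp_pos x))
    have h2 : (∫ _ in (j : ℝ)/m..((j : ℝ) + 1)/m, (K : ℝ)) = (1/m) * K := by
      rw [intervalIntegral.integral_const, smul_eq_mul, hba j]
    calc Aj j ≤ m * ((1/m) * K) := mul_le_mul_of_nonneg_left (h2 ▸ h1) hm0.le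
      _ = K := by field_simp
  have hAdiff : ∀ j, |Aj j - h z| ≤ K := by
    intro j
    rw [abs_sub_le_iff]
    constructor
    · linarith [hAK j, hhz0]
    · linarith [hA0 j, hhzK]
  have hkey : ∀ j : ℤ, |κj j| * |Aj j - h z| ≤ ζ * ε / 2 := by
    intro j
    by_cases hnear : |(j : ℝ) - m * Real.log z| ≤ m * δ / 2
    · have haz : |(j : ℝ)/m - Real.log z| ≤ δ / 2 := by
        have heq : (j : ℝ)/m - Real.log z = ((j : ℝ) - m * Real.log z)/m := by field_simp
        rw [heq, abs_div, abs_of_pos hm0, div_le_iff₀ hm0]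
        nlinarith
      have hbound : ∀ x ∈ Set.uIoc ((j : ℝ)/m) (((j : ℝ) + 1)/m),
          ‖h (Real.exp x) - h z‖ ≤ ε₀ := by
        intro x hx
        rw [Set.uIoc_of_le (hab j)] at hx
        have hxa : |x - (j : ℝ)/m| ≤ 1/m := by
          rw [abs_of_nonneg (by linarith [hx.1])]
          linarith [hx.2, hba j]
        have hxl : |x - Real.log z| ≤ δ := by
          have heq : x - Real.log z = (x - (j : ℝ)/m) + ((j : ℝ)/m - Real.log z) := by ring
          calc |x - Real.log z| ≤ |x - (j : ℝ)/m| + |(j : ℝ)/m - Real.log z| := by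
                rw [heq]; exact abs_add_le _ _
            _ ≤ 1/m + δ/2 := add_le_add hxa haz
            _ ≤ δ := by linarith
        have := hδc (Real.exp x) (Real.exp_pos x) (by rwa [Real.log_exp])
        rw [Real.norm_eq_abs]
        exact this.le
      have hnorm := intervalIntegral.norm_integral_le_of_norm_le_const hbound
      have hconst : (∫ _ in (j : ℝ)/m..((j : ℝ) + 1)/m, h z) = (1/m) * h z := by
        rw [intervalIntegral.integral_const, smul_eq_mul, hba j]
      have hsub : Aj j - h z
          = m * ∫ v in (j : ℝ)/m..((j : ℝ) + 1)/m, (h (Real.exp v) - h z) := by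
        rw [intervalIntegral.integral_sub (hint _ _) intervalIntegrable_const, hconst]
        simp only [hAjdef]
        field_simp
      have habs : |Aj j - h z| ≤ ε₀ := by
        rw [hsub, abs_mul, abs_of_pos hm0]
        calc m * |∫ v in (j : ℝ)/m..((j : ℝ) + 1)/m, (h (Real.exp v) - h z)|
            ≤ m * (ε₀ * |(((j : ℝ) + 1)/m) - ((j : ℝ)/m)|) := by
              exact mul_le_mul_of_nonneg_left hnorm hm0.le
          _ = ε₀ := by
              rw [hba j, abs_of_pos (by positivity : (0:ℝ) < 1/m)]
              field_simp
      calc |κj j| * |Aj j - h z| ≤ B * ε₀ :=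
            mul_le_mul (hκjB j) habs (abs_nonneg _) hBpos.le
        _ = ζ * ε / 2 := by rw [hε₀def]; field_simp
    · push_neg at hnear
      have ht0 : 0 < m * δ / 2 := by positivity
      have hκsmall : |κj j| * (m * δ / 2) ^ 2 ≤ M2 := by
        have h1 := hm2 (z ^ m) (Real.rpow_pos_of_pos hz m) j
        rw [Real.log_rpow hz] at h1
        have h2 : (m * δ / 2) ^ 2 ≤ |(j : ℝ) - m * Real.log z| ^ 2 :=
          pow_le_pow_left₀ ht0.le hnear.le 2
        calc |κj j| * (m * δ / 2) ^ 2 ≤ |κj j| * |(j : ℝ) - m * Real.log z| ^ 2 :=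
              mul_le_mul_of_nonneg_left h2 (abs_nonneg _)
          _ ≤ M2 := h1
      have hprod : |κj j| * |Aj j - h z| * (m * δ / 2) ^ 2 ≤ M2 * K := by
        calc |κj j| * |Aj j - h z| * (m * δ / 2) ^ 2
            = (|κj j| * (m * δ / 2) ^ 2) * |Aj j - h z| := by ring
          _ ≤ M2 * K := mul_le_mul hκsmall (hAdiff j) (abs_nonneg _) hM2
      have hfinal : M2 * K ≤ ζ * ε / 2 * (m * δ / 2) ^ 2 := by nlinarith [hmsq]
      exact (mul_le_mul_iff_of_pos_right (pow_pos ht0 2)).1 (le_trans hprod hfinal)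
  set D := ⨆ j, κj j with hDdef
  have hDbdd : BddAbove (Set.range κj) :=
    bddAbove_range_of_le (fun j => (le_abs_self _).trans (hκjB j))
  have hNbdd : BddAbove (Set.range fun j => κj j * Aj j) := by
    refine bddAbove_range_of_le (c := B * K) (fun j => ?_)
    calc κj j * Aj j ≤ |κj j| * Aj j := mul_le_mul_of_nonneg_right (le_abs_self _) (hA0 j)
      _ ≤ B * K := mul_le_mul (hκjB j) (hAK j) (hA0 j) hBpos.le
  have hGbdd : BddAbove (Set.range fun j => κj j * h z) := by
    refine bddAbove_range_of_le (c := B * h z) (fun j => ?_)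
    calc κj j * h z ≤ |κj j| * h z := mul_le_mul_of_nonneg_right (le_abs_self _) hhz0
      _ ≤ B * h z := mul_le_mul_of_nonneg_right (hκjB j) hhz0
  have hDζ : ζ ≤ D := by
    set j₀ := ⌊m * Real.log z⌋ with hj₀
    have hval : Real.exp (-(j₀ : ℝ)) * z ^ m = Real.exp (m * Real.log z - (j₀ : ℝ)) := by
      rw [Real.rpow_def_of_pos hz, ← Real.exp_add]
      ring_nf
    have hmem : Real.exp (m * Real.log z - (j₀ : ℝ)) ∈ Set.Icc (1:ℝ) (Real.exp 1) := by
      constructor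
      · rw [show (1:ℝ) = Real.exp 0 from (Real.exp_zero).symm]
        exact Real.exp_le_exp.2 (by linarith [Int.floor_le (m * Real.log z)])
      · exact Real.exp_le_exp.2 (by linarith [Int.lt_floor_add_one (m * Real.log z)])
    have hj : ζ ≤ κj j₀ := by
      show ζ ≤ κ (Real.exp (-(j₀ : ℝ)) * z ^ m)
      rw [hval]
      exact hinf _ hmem
    exact hj.trans (le_ciSup hDbdd j₀)
  have hD0 : 0 < D := lt_of_lt_of_le hζ hDζ
  have hDhz : D * h z = ⨆ j, κj j * h z := Real.iSup_mul_of_nonneg hhz0 _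
  have hND : |(⨆ j, κj j * Aj j) - D * h z| ≤ ζ * ε / 2 := by
    rw [hDhz]
    refine abs_ciSup_sub_ciSup hNbdd hGbdd fun j => ?_
    rw [← mul_sub, abs_mul]
    exact hkey j
  have hMop : MopZ κ m h z = (⨆ j, κj j * Aj j) / D := rfl
  rw [Real.dist_eq, hMop]
  have hsplit : (⨆ j, κj j * Aj j) / D - h z = ((⨆ j, κj j * Aj j) - D * h z) / D := by
    field_simp
  rw [hsplit, abs_div, abs_of_pos hD0]
  calc |(⨆ j, κj j * Aj j) - D * h z| / D ≤ (ζ * ε / 2) / D :=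
        (div_le_div_iff_of_pos_right hD0).2 hND
    _ ≤ (ζ * ε / 2) / ζ := div_le_div_of_nonneg_left (by positivity) hζ hDζ
    _ = ε / 2 := by field_simp
    _ < ε := by linarith
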